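/- Fix integers ℓ ≥ 1 and k ≥ 1, and let λ be a partition with at most kℓ parts. For 1 ≤ i ≤ kℓ write λ_i − i + 1 = (a_i − 1)ℓ + b_i with a_i ∈ ℤ and 1 ≤ b_i ≤ ℓ, and put a′_i = ⌊(i−1)/ℓ⌋. Then: (1) for each i, the number of cells in the i-th row of λ whose content is divisible by ℓ equals a_i + a′_i, and hence n_0(λ) = Σ_{i=1}^{kℓ}(a_i + a′_i); (2) if moreover for every p ∈ {1,…,ℓ} there exists an integer s_p ≥ −k such that the multiset {a_i : 1 ≤ i ≤ kℓ, b_i = p} equals {−k+1, −k+2, …, s_p} (this holds precisely when λ is an ℓ-core, and then automatically Σ_{p=1}^{ℓ} s_p = 0), then n_0(λ) = (1/2)·Σ_{p=1}^{ℓ} s_p². -/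

import Mathlib

lemma row_count (ℓ : ℕ) (hℓ : 1 ≤ ℓ) (i N : ℕ) (hi : 1 ≤ i)
    (A B A' : ℤ)
    (hAB : (N : ℤ) - i + 1 = (A - 1) * ℓ + B) (hB1 : 1 ≤ B) (hB2 : B ≤ ℓ)
    (hA' : A' = (((i - 1) / ℓ : ℕ) : ℤ)) :
    ((((Finset.Icc 1 N).filter fun j : ℕ => (ℓ : ℤ) ∣ ((j : ℤ) - (i : ℤ))).card : ℤ)
      = A + A') := by
  have hlpos : (0 : ℤ) < (ℓ : ℤ) := by exact_mod_cast hℓ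
  -- facts about A'
  have hdm := Nat.div_add_mod (i - 1) ℓ
  have hmlt := Nat.mod_lt (i - 1) (show 0 < ℓ by omega)
  have h1 : A' * ℓ ≤ (i : ℤ) - 1 ∧ (i : ℤ) - 1 < (A' + 1) * ℓ := by
    have hc : ((i - 1 : ℕ) : ℤ) = (i : ℤ) - 1 := by
      have := Nat.cast_sub hi (R := ℤ); simpa using this
    constructor
    · rw [hA']
      have : ((i - 1) / ℓ : ℕ) * ℓ ≤ i - 1 := Nat.div_mul_le_self _ _
      calc (((i - 1) / ℓ : ℕ) : ℤ) * ℓ = (((i-1)/ℓ * ℓ : ℕ) : ℤ) := by push_cast; ring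
        _ ≤ ((i - 1 : ℕ) : ℤ) := by exact_mod_cast this
        _ = (i : ℤ) - 1 := hc
    · rw [hA']
      have : i - 1 < ((i - 1) / ℓ + 1) * ℓ := (Nat.div_lt_iff_lt_mul (by omega)).mp (Nat.lt_succ_self _)
      calc (i : ℤ) - 1 = ((i - 1 : ℕ) : ℤ) := hc.symm
        _ < ((((i-1)/ℓ + 1) * ℓ : ℕ) : ℤ) := by exact_mod_cast this
        _ = ((((i - 1) / ℓ : ℕ) : ℤ) + 1) * ℓ := by push_cast; ring
  obtain ⟨hA'1, hA'2⟩ := h1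
  -- N - i = (A-1)ℓ + (B-1)
  have hN : (N : ℤ) - i = (A - 1) * ℓ + (B - 1) := by linarith
  have key : ((Finset.Icc 1 N).filter fun j : ℕ => (ℓ : ℤ) ∣ ((j : ℤ) - (i : ℤ))).card
      = (Finset.Icc (-A') (A - 1)).card := by
    refine Finset.card_bij' (fun j _ => ((j : ℤ) - i) / ℓ)
        (fun t _ => ((i : ℤ) + t * ℓ).toNat) ?_ ?_ ?_ ?_
    · intro j hj
      simp only [Finset.mem_filter, Finset.mem_Icc] at hj
      obtain ⟨⟨hj1, hj2⟩, t, ht⟩ := hj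
      have hdiv : ((j : ℤ) - i) / ℓ = t := by rw [ht]; exact Int.mul_ediv_cancel_left _ (by omega)
      try dsimp only
      rw [hdiv, Finset.mem_Icc]
      constructor
      · -- t ≥ -A'
        have h1 : -(A' + 1) * ℓ < (ℓ : ℤ) * t := by
          rw [← ht]
          have : (1 : ℤ) ≤ (j : ℤ) := by exact_mod_cast hj1
          nlinarith
        have : -(A' + 1) < t := lt_of_mul_lt_mul_right (by linarith [mul_comm (ℓ:ℤ) t]) (le_of_lt hlpos)
        omega
      · have h2 : (ℓ : ℤ) * t < A * ℓ := by
          rw [← ht]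
          have : (j : ℤ) ≤ N := by exact_mod_cast hj2
          nlinarith
        have : t < A := lt_of_mul_lt_mul_right (by linarith [mul_comm (ℓ:ℤ) t]) (le_of_lt hlpos)
        omega
    · intro t ht
      rw [Finset.mem_Icc] at ht
      obtain ⟨ht1, ht2⟩ := ht
      have hge : (1 : ℤ) ≤ (i : ℤ) + t * ℓ := by nlinarith
      have hle : (i : ℤ) + t * ℓ ≤ N := by nlinarith
      simp only [Finset.mem_filter, Finset.mem_Icc]
      refine ⟨⟨?_, ?_⟩, ?_⟩
      · omega
      · omega
      · have : (((i : ℤ) + t * ℓ).toNat : ℤ) = (i : ℤ) + t * ℓ := Int.toNat_of_nonneg (by omega)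
        rw [this]
        exact ⟨t, by ring⟩
    · intro j hj
      simp only [Finset.mem_filter, Finset.mem_Icc] at hj
      obtain ⟨⟨hj1, hj2⟩, t, ht⟩ := hj
      have hdiv : ((j : ℤ) - i) / ℓ = t := by rw [ht]; exact Int.mul_ediv_cancel_left _ (by omega)
      try dsimp only
      rw [hdiv]
      have h2 : (i : ℤ) + t * ℓ = (j : ℤ) := by
        have := mul_comm t (ℓ : ℤ); linarith
      omega
    · intro t ht
      rw [Finset.mem_Icc] at ht
      obtain ⟨ht1, ht2⟩ := ht
      have hge : (0 : ℤ) ≤ (i : ℤ) + t * ℓ := by nlinarith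
      have h0 : (((i : ℤ) + t * ℓ).toNat : ℤ) = (i : ℤ) + t * ℓ := Int.toNat_of_nonneg hge
      try dsimp only
      rw [h0]
      have h1 : (i : ℤ) + t * ℓ - i = (ℓ : ℤ) * t := by ring
      rw [h1, Int.mul_ediv_cancel_left _ (by omega)]
  rw [key, Int.card_Icc]
  have hnn : 0 ≤ A + A' := by
    have h2 : -(A' + 1) * ℓ < A * ℓ := by nlinarith [(by positivity : (0:ℤ) ≤ (N:ℤ))]
    have : -(A' + 1) < A := lt_of_mul_lt_mul_right (by linarith) (le_of_lt hlpos)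
    omega
  omega

-- Gauss sum over an integer interval
lemma gauss_int (u : ℤ) : ∀ n : ℕ, 2 * (∑ m ∈ Finset.Icc u (u + n - 1), m) = n * (2 * u + n - 1) := by
  intro n
  induction n with
  | zero =>
    have : Finset.Icc u (u + (0:ℕ) - 1) = ∅ := Finset.Icc_eq_empty (by push_cast; omega)
    simp [this]
  | succ m ih =>
    have hins : Finset.Icc u (u + (m+1:ℕ) - 1) = insert (u + m) (Finset.Icc u (u + m - 1)) := by
      ext x
      simp only [Finset.mem_Icc, Finset.mem_insert]
      push_cast
      omega
    have hnot : (u + m) ∉ Finset.Icc u (u + (m:ℕ) - 1) := by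
      simp only [Finset.mem_Icc]; push_cast; omega
    rw [hins, Finset.sum_insert hnot]
    push_cast at ih ⊢
    ring_nf
    ring_nf at ih
    linarith

-- sum of ⌊(i-1)/ℓ⌋
lemma apsum (ℓ : ℕ) (hℓ : 1 ≤ ℓ) :
    ∀ K : ℕ, 2 * (∑ i ∈ Finset.Icc 1 (K * ℓ), (((i - 1) / ℓ : ℕ) : ℤ)) = ℓ * K * (K - 1) := by
  intro K
  induction K with
  | zero => simp
  | succ m ih =>
    have h0 : ∀ n : ℕ, Finset.Icc 1 n = Finset.Ioc 0 n := by
      intro n; ext x; simp only [Finset.mem_Icc, Finset.mem_Ioc]; omega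
    have hsplit := Finset.sum_Ioc_consecutive (fun i : ℕ => (((i - 1) / ℓ : ℕ) : ℤ))
      (Nat.zero_le (m * ℓ)) (by nlinarith : m * ℓ ≤ (m + 1) * ℓ)
    have hconst : ∑ i ∈ Finset.Ioc (m * ℓ) ((m + 1) * ℓ), (((i - 1) / ℓ : ℕ) : ℤ)
        = ℓ * m := by
      have hterm : ∀ i ∈ Finset.Ioc (m * ℓ) ((m + 1) * ℓ), (((i - 1) / ℓ : ℕ) : ℤ) = (m : ℤ) := by
        intro i hi
        rw [Finset.mem_Ioc] at hi
        have hdiv : (i - 1) / ℓ = m := by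
          apply Nat.div_eq_of_lt_le
          · omega
          · have : (m + 1) * ℓ = m * ℓ + ℓ := by ring
            omega
        rw [hdiv]
      rw [Finset.sum_congr rfl hterm, Finset.sum_const, Nat.card_Ioc]
      have hc : (m + 1) * ℓ - m * ℓ = ℓ := by
        have : (m + 1) * ℓ = m * ℓ + ℓ := by ring
        omega
      rw [hc, nsmul_eq_mul]
    rw [h0] at ih ⊢
    rw [← hsplit, mul_add, ih, hconst]
    push_cast
    ring

/- Statement 13: counting the cells of a partition whose content is divisible by ℓ,
row by row, and the formula `n_0(λ) = ½ Σ_p s_p²` for ℓ-cores. -/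

theorem statement_13
    (ℓ k : ℕ) (hℓ : 1 ≤ ℓ) (hk : 1 ≤ k)
    -- `lam` is a partition with at most `kℓ` parts (`lam i` is the `i`-th part, `1`-indexed)
    (lam : ℕ → ℕ)
    (hmono : ∀ i j : ℕ, 1 ≤ i → i ≤ j → lam j ≤ lam i)
    (hsupp : ∀ i : ℕ, k * ℓ < i → lam i = 0)
    -- for `1 ≤ i ≤ kℓ`, write `λ_i - i + 1 = (a_i - 1)ℓ + b_i` with `1 ≤ b_i ≤ ℓ`
    (a b : ℕ → ℤ)
    (hab : ∀ i, 1 ≤ i → i ≤ k * ℓ →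
      (lam i : ℤ) - (i : ℤ) + 1 = (a i - 1) * (ℓ : ℤ) + b i ∧ 1 ≤ b i ∧ b i ≤ (ℓ : ℤ))
    -- `a'_i = ⌊(i-1)/ℓ⌋`
    (a' : ℕ → ℤ) (ha' : ∀ i, a' i = (((i - 1) / ℓ : ℕ) : ℤ)) :
    -- (1) the number of cells of content divisible by `ℓ` in the `i`-th row is `a_i + a'_i`,
    -- and hence `n_0(λ) = Σ_{i=1}^{kℓ} (a_i + a'_i)`
    ((∀ i, 1 ≤ i → i ≤ k * ℓ →
      ((((Finset.Icc 1 (lam i)).filter fun j : ℕ => (ℓ : ℤ) ∣ ((j : ℤ) - (i : ℤ))).card : ℤ)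
        = a i + a' i)) ∧
      ((∑ i ∈ Finset.Icc 1 (k * ℓ),
          (((Finset.Icc 1 (lam i)).filter fun j : ℕ => (ℓ : ℤ) ∣ ((j : ℤ) - (i : ℤ))).card) : ℤ)
        = ∑ i ∈ Finset.Icc 1 (k * ℓ), (a i + a' i))) ∧
    -- (2) if for each `p` the multiset `{a_i : b_i = p}` is `{-k+1, -k+2, …, s_p}`
    -- then `n_0(λ) = ½ Σ_{p=1}^{ℓ} s_p²`
    (∀ s : ℕ → ℤ,
      (∀ p : ℕ, 1 ≤ p → p ≤ ℓ →
        -(k : ℤ) ≤ s p ∧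
        ((Finset.Icc 1 (k * ℓ)).filter fun i => b i = (p : ℤ)).val.map a =
          (Finset.Icc (-(k : ℤ) + 1) (s p)).val) →
      ((∑ i ∈ Finset.Icc 1 (k * ℓ),
          (((Finset.Icc 1 (lam i)).filter fun j : ℕ => (ℓ : ℤ) ∣ ((j : ℤ) - (i : ℤ))).card) : ℚ)
        = (∑ p ∈ Finset.Icc 1 ℓ, ((s p : ℚ)) ^ 2) / 2)) := by
  have h1 : ∀ i, 1 ≤ i → i ≤ k * ℓ →
      ((((Finset.Icc 1 (lam i)).filter fun j : ℕ => (ℓ : ℤ) ∣ ((j : ℤ) - (i : ℤ))).card : ℤ)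
        = a i + a' i) := by
    intro i hi1 hi2
    obtain ⟨hA, hB1, hB2⟩ := hab i hi1 hi2
    exact row_count ℓ hℓ i (lam i) hi1 (a i) (b i) (a' i) hA hB1 hB2 (ha' i)
  have h1s : ((∑ i ∈ Finset.Icc 1 (k * ℓ),
        (((Finset.Icc 1 (lam i)).filter fun j : ℕ => (ℓ : ℤ) ∣ ((j : ℤ) - (i : ℤ))).card)) : ℤ)
      = ∑ i ∈ Finset.Icc 1 (k * ℓ), (a i + a' i) := by
    push_cast
    refine Finset.sum_congr rfl ?_
    intro i hi
    rw [Finset.mem_Icc] at hi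
    exact h1 i hi.1 hi.2
  refine ⟨⟨h1, h1s⟩, ?_⟩
  intro s hs
  -- fiberwise decomposition infrastructure
  have hmaps : ∀ i ∈ Finset.Icc 1 (k * ℓ), (b i).toNat ∈ Finset.Icc 1 ℓ := by
    intro i hi; rw [Finset.mem_Icc] at hi ⊢
    obtain ⟨_, hb1, hb2⟩ := hab i hi.1 hi.2
    omega
  have hfilter : ∀ p ∈ Finset.Icc 1 ℓ,
      (Finset.Icc 1 (k * ℓ)).filter (fun i => b i = (p : ℤ))
      = (Finset.Icc 1 (k * ℓ)).filter (fun i => (b i).toNat = p) := by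
    intro p hp
    refine Finset.filter_congr ?_
    intro i hi
    rw [Finset.mem_Icc] at hi
    obtain ⟨_, hb1, hb2⟩ := hab i hi.1 hi.2
    constructor <;> intro h <;> omega
  have hfibZ : ∑ p ∈ Finset.Icc 1 ℓ,
      ∑ i ∈ (Finset.Icc 1 (k * ℓ)).filter (fun i => b i = (p : ℤ)), a i
      = ∑ i ∈ Finset.Icc 1 (k * ℓ), a i := by
    rw [Finset.sum_congr rfl (fun p hp => by rw [hfilter p hp])]
    exact Finset.sum_fiberwise_of_maps_to hmaps a
  have hfibC : ∑ p ∈ Finset.Icc 1 ℓ,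
      ((Finset.Icc 1 (k * ℓ)).filter (fun i => b i = (p : ℤ))).card = k * ℓ := by
    have hthis := Finset.sum_fiberwise_of_maps_to hmaps (fun _ => (1 : ℕ))
    calc ∑ p ∈ Finset.Icc 1 ℓ, ((Finset.Icc 1 (k * ℓ)).filter (fun i => b i = (p : ℤ))).card
        = ∑ p ∈ Finset.Icc 1 ℓ,
            ∑ _i ∈ (Finset.Icc 1 (k * ℓ)).filter (fun i => b i = (p : ℤ)), 1 :=
          Finset.sum_congr rfl (fun p _ => Finset.card_eq_sum_ones _)
      _ = ∑ p ∈ Finset.Icc 1 ℓ,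
            ∑ _i ∈ (Finset.Icc 1 (k * ℓ)).filter (fun i => (b i).toNat = p), 1 :=
          Finset.sum_congr rfl (fun p hp => by rw [hfilter p hp])
      _ = ∑ _i ∈ Finset.Icc 1 (k * ℓ), 1 := hthis
      _ = k * ℓ := by rw [Finset.sum_const, smul_eq_mul, mul_one, Nat.card_Icc]; omega
  -- per-fiber cardinality
  have hcardp : ∀ p, 1 ≤ p → p ≤ ℓ →
      ((Finset.Icc 1 (k * ℓ)).filter (fun i => b i = (p : ℤ))).card = (s p + k).toNat := by
    intro p hp1 hp2
    have h := congrArg Multiset.card (hs p hp1 hp2).2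
    rw [Multiset.card_map] at h
    have h2 : ((Finset.Icc 1 (k * ℓ)).filter (fun i => b i = (p : ℤ))).card
        = (Finset.Icc (-(k : ℤ) + 1) (s p)).card := h
    rw [h2, Int.card_Icc]
    congr 1
    ring
  -- Σ_p s_p = 0
  have hsum0 : ∑ p ∈ Finset.Icc 1 ℓ, s p = 0 := by
    have hcast : ∑ p ∈ Finset.Icc 1 ℓ, (s p + (k : ℤ)) = (k : ℤ) * ℓ := by
      calc ∑ p ∈ Finset.Icc 1 ℓ, (s p + (k : ℤ))
          = ∑ p ∈ Finset.Icc 1 ℓ, (((s p + k).toNat : ℤ)) := by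
            refine Finset.sum_congr rfl ?_
            intro p hp
            rw [Finset.mem_Icc] at hp
            have := (hs p hp.1 hp.2).1
            rw [Int.toNat_of_nonneg (by omega)]
        _ = ((∑ p ∈ Finset.Icc 1 ℓ, (s p + k).toNat : ℕ) : ℤ) := by push_cast; rfl
        _ = ((∑ p ∈ Finset.Icc 1 ℓ,
              ((Finset.Icc 1 (k * ℓ)).filter (fun i => b i = (p : ℤ))).card : ℕ) : ℤ) := by
            congr 1
            refine Finset.sum_congr rfl ?_
            intro p hp
            rw [Finset.mem_Icc] at hp
            rw [hcardp p hp.1 hp.2]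
        _ = ((k * ℓ : ℕ) : ℤ) := by rw [hfibC]
        _ = (k : ℤ) * ℓ := by push_cast; ring
    rw [Finset.sum_add_distrib, Finset.sum_const, Nat.card_Icc] at hcast
    simp only [Nat.add_sub_cancel, nsmul_eq_mul] at hcast
    linarith
  -- per-fiber sum of a
  have hsump : ∀ p, 1 ≤ p → p ≤ ℓ →
      2 * (∑ i ∈ (Finset.Icc 1 (k * ℓ)).filter (fun i => b i = (p : ℤ)), a i)
        = (s p + k) * (s p - k + 1) := by
    intro p hp1 hp2
    have he : ∑ i ∈ (Finset.Icc 1 (k * ℓ)).filter (fun i => b i = (p : ℤ)), a i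
        = ∑ m ∈ Finset.Icc (-(k : ℤ) + 1) (s p), m := by
      rw [Finset.sum_eq_multiset_sum, Finset.sum_eq_multiset_sum, (hs p hp1 hp2).2, Multiset.map_id']
    rw [he]
    have hnn := (hs p hp1 hp2).1
    have hg := gauss_int (-(k : ℤ) + 1) (s p + k).toNat
    have ht : ((s p + k).toNat : ℤ) = s p + k := Int.toNat_of_nonneg (by omega)
    rw [ht] at hg
    have hb2 : -(k : ℤ) + 1 + (s p + k) - 1 = s p := by ring
    rw [hb2] at hg
    linear_combination hg
  -- main integer identity
  have hbig : 2 * (∑ i ∈ Finset.Icc 1 (k * ℓ), (a i + a' i))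
      = ∑ p ∈ Finset.Icc 1 ℓ, (s p) ^ 2 := by
    have hA'sum : ∑ i ∈ Finset.Icc 1 (k * ℓ), a' i
        = ∑ i ∈ Finset.Icc 1 (k * ℓ), (((i - 1) / ℓ : ℕ) : ℤ) :=
      Finset.sum_congr rfl (fun i _ => ha' i)
    have h2a : 2 * (∑ i ∈ Finset.Icc 1 (k * ℓ), a i)
        = ∑ p ∈ Finset.Icc 1 ℓ, (s p + (k : ℤ)) * (s p - k + 1) := by
      rw [← hfibZ, Finset.mul_sum]
      exact Finset.sum_congr rfl (fun p hp => by
        rw [Finset.mem_Icc] at hp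
        exact hsump p hp.1 hp.2)
    rw [Finset.sum_add_distrib, mul_add, h2a, hA'sum, apsum ℓ hℓ k]
    have hexp : ∑ p ∈ Finset.Icc 1 ℓ, (s p + (k : ℤ)) * (s p - k + 1)
        = ∑ p ∈ Finset.Icc 1 ℓ, ((s p) ^ 2 + s p + ((k : ℤ) - (k : ℤ) ^ 2)) :=
      Finset.sum_congr rfl (fun p _ => by ring)
    rw [hexp, Finset.sum_add_distrib, Finset.sum_add_distrib, hsum0, Finset.sum_const,
      Nat.card_Icc]
    simp only [Nat.add_sub_cancel, nsmul_eq_mul]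
    ring
  -- conclude over ℚ
  have hZZ : 2 * ((∑ i ∈ Finset.Icc 1 (k * ℓ),
      (((Finset.Icc 1 (lam i)).filter fun j : ℕ => (ℓ : ℤ) ∣ ((j : ℤ) - (i : ℤ))).card)) : ℤ)
      = ∑ p ∈ Finset.Icc 1 ℓ, (s p) ^ 2 := by rw [h1s]; exact hbig
  have hQ := congrArg (fun z : ℤ => (z : ℚ)) hZZ
  rw [eq_div_iff (by norm_num : (2 : ℚ) ≠ 0)]
  push_cast at hQ ⊢
  linarith
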